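/- Let V be a finite vertex set, G_A a graph on V, and β ∈ (0,1]. Let H_1, …, H_m be graphs on V together with nonnegative reals p_1, …, p_m summing to 1, and for each i let C_i be a minimum vertex cover of the union graph G_A ∪ H_i (so |C_i| = τ(G_A ∪ H_i)). For v ∈ V set c_v = ∑_{i : v ∈ C_i} p_i and w_v = 1 − (2 − β)·c_v. If X is a vertex cover of G_A minimizing ∑_{v∈X} w_v among all vertex covers of G_A, then ∑_i p_i · ( |X| + (2 − β)·τ(H_i[V∖X]) ) ≤ (2 − β/2) · ∑_i p_i · τ(G_A ∪ H_i). -/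

import Mathlib

/-- `S` is a vertex cover of the graph `G`: every edge has an endpoint in `S`. -/
def IsVertexCover {V : Type*} (G : SimpleGraph V) (S : Finset V) : Prop :=
  ∀ ⦃u v : V⦄, G.Adj u v → u ∈ S ∨ v ∈ S

/-- `τ(G)`: the minimum cardinality of a vertex cover of `G`. -/
noncomputable def tau {V : Type*} [Fintype V] (G : SimpleGraph V) : ℕ :=
  sInf {n : ℕ | ∃ S : Finset V, IsVertexCover G S ∧ S.card = n}

/-- `G[V∖X]`: the subgraph of `G` induced on the complement of `X`. -/
def inducedOutside {V : Type*} (G : SimpleGraph V) (X : Finset V) : SimpleGraph V where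
  Adj u v := G.Adj u v ∧ u ∉ X ∧ v ∉ X
  symm := by
    constructor
    intro u v h
    exact ⟨h.1.symm, h.2.2, h.2.1⟩
  loopless := by
    constructor
    intro v h
    exact G.loopless.irrefl v h.1

lemma tau_le_card {V : Type*} [Fintype V] {G : SimpleGraph V} {S : Finset V}
    (h : IsVertexCover G S) : tau G ≤ S.card :=
  Nat.sInf_le ⟨S, h, rfl⟩

/-- The main estimate in the proof of Lemma 3.2 of the paper: if `C i` is a minimum
vertex cover of `G_A ⊔ H i`, `c v` is the probability that `v` lies in the random
minimum cover, and `X` is a vertex cover of `G_A` of minimum weight for the weights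
`w v = 1 - (2-β)·c v`, then
`E[|X| + (2-β)·τ(H[V∖X])] ≤ (2-β/2)·E[τ(G_A ∪ H)]`. -/
theorem stmt_3 {V : Type*} [Fintype V] [DecidableEq V]
    (G_A : SimpleGraph V) (β : ℝ) (hβ : β ∈ Set.Ioc (0 : ℝ) 1)
    (m : ℕ) (H : Fin m → SimpleGraph V) (p : Fin m → ℝ)
    (hp : ∀ i, 0 ≤ p i) (hpsum : ∑ i, p i = 1)
    (C : Fin m → Finset V)
    (hCcover : ∀ i, IsVertexCover (G_A ⊔ H i) (C i))
    (hCmin : ∀ i, (C i).card = tau (G_A ⊔ H i))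
    (c : V → ℝ) (hc : ∀ v, c v = ∑ i, if v ∈ C i then p i else 0)
    (X : Finset V) (hX : IsVertexCover G_A X)
    (hXmin : ∀ Y : Finset V, IsVertexCover G_A Y →
      ∑ v ∈ X, (1 - (2 - β) * c v) ≤ ∑ v ∈ Y, (1 - (2 - β) * c v)) :
    ∑ i, p i * ((X.card : ℝ) + (2 - β) * (tau (inducedOutside (H i) X) : ℝ)) ≤
      (2 - β / 2) * ∑ i, p i * (tau (G_A ⊔ H i) : ℝ) := by
  obtain ⟨hβ0, hβ1⟩ := hβ
  have h2β : (0:ℝ) < 2 - β := by linarith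
  -- basic facts about c
  have hc0 : ∀ v, 0 ≤ c v := by
    intro v; rw [hc v]
    exact Finset.sum_nonneg fun i _ => by by_cases h : v ∈ C i <;> simp [h, hp i]
  have hc1 : ∀ v, c v ≤ 1 := by
    intro v; rw [hc v, ← hpsum]
    exact Finset.sum_le_sum fun i _ => by by_cases h : v ∈ C i <;> simp [h, hp i]
  have hedge : ∀ ⦃u v : V⦄, G_A.Adj u v → 1 ≤ c u + c v := by
    intro u v huv
    rw [hc u, hc v, ← Finset.sum_add_distrib, ← hpsum]
    refine Finset.sum_le_sum fun i _ => ?_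
    have h1 : (0:ℝ) ≤ if v ∈ C i then p i else 0 := by
      by_cases h' : v ∈ C i <;> simp [h', hp i]
    have h2 : (0:ℝ) ≤ if u ∈ C i then p i else 0 := by
      by_cases h' : u ∈ C i <;> simp [h', hp i]
    rcases hCcover i ((SimpleGraph.sup_adj G_A (H i) u v).mpr (Or.inl huv)) with h | h
    · rw [if_pos h]; linarith
    · rw [if_pos h]; linarith
  -- counting: p-weighted cardinalities versus c
  have hsumS : ∀ S : Finset V, ∑ i, p i * ((C i ∩ S).card : ℝ) = ∑ v ∈ S, c v := by
    intro S
    have hcard : ∀ i : Fin m, ((C i ∩ S).card : ℝ) = ∑ v ∈ S, (if v ∈ C i then (1:ℝ) else 0) := by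
      intro i
      rw [Finset.sum_boole, Finset.filter_mem_eq_inter, Finset.inter_comm]
    calc ∑ i, p i * ((C i ∩ S).card:ℝ)
        = ∑ i, ∑ v ∈ S, (if v ∈ C i then p i else 0) := by
          refine Finset.sum_congr rfl fun i _ => ?_
          rw [hcard i, Finset.mul_sum]
          refine Finset.sum_congr rfl fun v _ => ?_
          by_cases h : v ∈ C i <;> simp [h]
      _ = ∑ v ∈ S, ∑ i, (if v ∈ C i then p i else 0) := Finset.sum_comm
      _ = ∑ v ∈ S, c v := Finset.sum_congr rfl fun v _ => (hc v).symm
  have hT : ∑ i, p i * ((C i).card : ℝ) = ∑ v, c v := by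
    have := hsumS Finset.univ
    simpa using this
  -- Step A : bound tau of the induced graph
  have key1 : ∀ i, (tau (inducedOutside (H i) X) : ℝ) ≤
      ((C i).card : ℝ) - (((C i) ∩ X).card : ℝ) := by
    intro i
    have hcov : IsVertexCover (inducedOutside (H i) X) ((C i) \ X) := by
      intro u v huv
      rcases hCcover i ((SimpleGraph.sup_adj G_A (H i) u v).mpr (Or.inr huv.1)) with h | h
      · exact Or.inl (Finset.mem_sdiff.mpr ⟨h, huv.2.1⟩)
      · exact Or.inr (Finset.mem_sdiff.mpr ⟨h, huv.2.2⟩)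
    have h1 : tau (inducedOutside (H i) X) ≤ ((C i) \ X).card := tau_le_card hcov
    have h2 : ((C i) \ X).card + ((C i) ∩ X).card = (C i).card :=
      Finset.card_sdiff_add_card_inter _ _
    have h1' : ((tau (inducedOutside (H i) X) : ℝ)) ≤ (((C i) \ X).card : ℝ) := by
      exact_mod_cast h1
    have h2' : (((C i) \ X).card : ℝ) + (((C i) ∩ X).card : ℝ) = ((C i).card : ℝ) := by
      exact_mod_cast h2
    linarith
  -- the crux inequality
  have crux : ∑ v ∈ X, (1 - (2 - β) * c v) ≤ (β/2) * ∑ v, c v := by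
    classical
    have hdenom : ∀ x : ℝ, x ≤ 1/2 → 0 < 1 - (2-β)*x := by
      intro x hx; nlinarith
    have hUmono : ∀ x y : ℝ, x ≤ y → y ≤ 1/2 →
        (β/2) / (1 - (2-β)*x) ≤ (β/2) / (1 - (2-β)*y) := by
      intro x y hxy hy
      have h1 : 0 < 1 - (2-β)*y := hdenom y hy
      have h2 : 1 - (2-β)*y ≤ 1 - (2-β)*x := by nlinarith
      exact div_le_div_of_nonneg_left (by positivity) h1 h2
    have hU0 : ∀ x : ℝ, x ≤ 1/2 → 0 ≤ (β/2) / (1 - (2-β)*x) := by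
      intro x hx; exact div_nonneg (by positivity) (le_of_lt (hdenom x hx))
    set Θ : Finset ℝ :=
      insert (1/2 : ℝ) (Finset.image (fun v => min (c v) (1 - c v)) Finset.univ) with hΘ
    have hΘhalf : ∀ x ∈ Θ, x ≤ 1/2 := by
      intro x hx
      rw [hΘ, Finset.mem_insert] at hx
      rcases hx with rfl | hx
      · exact le_refl _
      · obtain ⟨v, _, rfl⟩ := Finset.mem_image.mp hx
        rcases le_total (c v) (1 - c v) with h | h
        · rw [min_eq_left h]; linarith
        · rw [min_eq_right h]; linarith [hc1 v]
    have hΘ0 : ∀ x ∈ Θ, 0 ≤ x := by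
      intro x hx
      rw [hΘ, Finset.mem_insert] at hx
      rcases hx with rfl | hx
      · norm_num
      · obtain ⟨v, _, rfl⟩ := Finset.mem_image.mp hx
        exact le_min (hc0 v) (by linarith [hc1 v])
    have hmemhalf : (1/2 : ℝ) ∈ Θ := by rw [hΘ]; exact Finset.mem_insert_self _ _
    set r : ℕ := Θ.card with hr
    have hrpos : 0 < r := Finset.card_pos.mpr ⟨1/2, hmemhalf⟩
    set e := Θ.orderIsoOfFin hr.symm with he
    set t : ℕ → ℝ := fun n => if h : n < r then (e ⟨n, h⟩ : ℝ) else 1/2 with ht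
    have htval : ∀ (n : ℕ) (hn : n < r), t n = (e ⟨n, hn⟩ : ℝ) := by
      intro n hn; rw [ht]; simp only [dif_pos hn]
    have htmem : ∀ n, n < r → t n ∈ Θ := by
      intro n hn; rw [htval n hn]; exact (e ⟨n, hn⟩).2
    have hthalf : ∀ n, t n ≤ 1/2 := by
      intro n
      by_cases hn : n < r
      · rw [htval n hn]; exact hΘhalf _ (e ⟨n, hn⟩).2
      · rw [ht]; simp only [dif_neg hn]
        exact le_refl _
    have htmono : ∀ a b : ℕ, a ≤ b → t a ≤ t b := by
      intro a b hab
      by_cases hb : b < r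
      · have ha : a < r := lt_of_le_of_lt hab hb
        rw [htval a ha, htval b hb]
        exact Subtype.coe_le_coe.mpr (e.monotone (by exact hab))
      · rw [ht]; simp only [dif_neg hb]
        exact hthalf a
    have htstrict : ∀ a b : ℕ, (ha : a < r) → (hb : b < r) → a < b → t a < t b := by
      intro a b ha hb hab
      rw [htval a ha, htval b hb]
      exact Subtype.coe_lt_coe.mpr (e.strictMono (by exact hab))
    have httop : t (r-1) = 1/2 := by
      refine le_antisymm (hthalf _) ?_
      set k : Fin r := e.symm ⟨1/2, hmemhalf⟩ with hk
      have hkval : t (k : ℕ) = 1/2 := by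
        rw [htval (k : ℕ) k.2]
        have : (⟨(k : ℕ), k.2⟩ : Fin r) = k := by exact Fin.eta k k.2
        rw [this, hk]
        simp
      have hkle : (k : ℕ) ≤ r - 1 := Nat.le_sub_one_of_lt k.2
      calc (1/2 : ℝ) = t (k : ℕ) := hkval.symm
        _ ≤ t (r-1) := htmono _ _ hkle
    set F : ℕ → ℝ := fun n => if n = 0 then 0 else (β/2) / (1 - (2-β)*(t (n-1))) with hF
    set μ : ℕ → ℝ := fun n => F (n+1) - F n with hμ
    have hF0 : F 0 = 0 := by simp [hF]
    have hFsucc : ∀ n : ℕ, F (n+1) = (β/2) / (1 - (2-β)*(t n)) := by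
      intro n; rw [hF]; simp
    have hμ0 : ∀ n, 0 ≤ μ n := by
      intro n
      rw [hμ]
      cases n with
      | zero =>
        simp only [hF0, hFsucc, sub_zero]
        exact hU0 _ (hthalf 0)
      | succ k =>
        simp only [hFsucc]
        have := hUmono (t k) (t (k+1)) (htmono k (k+1) (Nat.le_succ k)) (hthalf (k+1))
        linarith
    have hμrange : ∀ j : ℕ, ∑ n ∈ Finset.range j, μ n = F j := by
      intro j
      have : ∑ n ∈ Finset.range j, (F (n+1) - F n) = F j - F 0 := Finset.sum_range_sub F j
      rw [hμ]
      rw [this, hF0, sub_zero]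
    have hμsum : ∑ n ∈ Finset.range r, μ n = 1 := by
      rw [hμrange r]
      have : F r = (β/2) / (1 - (2-β)*(t (r-1))) := by
        simp [hF, hrpos.ne']
      rw [this, httop]
      have hb2 : 1 - (2-β)*(1/2 : ℝ) = β/2 := by ring
      rw [hb2, div_self (by positivity)]
    have hpartial : ∀ x ∈ Θ, ∑ n ∈ Finset.range r, (if t n ≤ x then μ n else 0)
        = (β/2) / (1 - (2-β)*x) := by
      intro x hx
      set j : Fin r := e.symm ⟨x, hx⟩ with hj
      have hxj : t (j : ℕ) = x := by
        rw [htval (j : ℕ) j.2]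
        have : (⟨(j : ℕ), j.2⟩ : Fin r) = j := Fin.eta j j.2
        rw [this, hj]
        simp
      have hiff : ∀ n, n < r → ((t n ≤ x) ↔ n ≤ (j : ℕ)) := by
        intro n hn
        constructor
        · intro hle
          by_contra hgt
          push_neg at hgt
          have := htstrict _ _ j.2 hn hgt
          rw [hxj] at this
          linarith
        · intro hle
          rw [← hxj]
          exact htmono _ _ hle
      have hcong : ∀ n ∈ Finset.range r,
          (if t n ≤ x then μ n else 0) = (if n < (j : ℕ) + 1 then μ n else 0) := by
        intro n hn
        rw [Finset.mem_range] at hn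
        by_cases h2 : t n ≤ x
        · rw [if_pos h2, if_pos (Nat.lt_succ_of_le ((hiff n hn).mp h2))]
        · rw [if_neg h2, if_neg (fun hlt => h2 ((hiff n hn).mpr (Nat.lt_succ_iff.mp hlt)))]
      have hsub : Finset.filter (fun n => n < (j : ℕ) + 1) (Finset.range r)
          = Finset.range ((j : ℕ) + 1) := by
        have hjr : (j : ℕ) < r := j.2
        ext k
        simp only [Finset.mem_filter, Finset.mem_range]
        omega
      rw [Finset.sum_congr rfl hcong, ← Finset.sum_filter, hsub, hμrange, hFsucc, hxj]
    -- the family of covers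
    set Y : Fin m → ℕ → Finset V := fun i n =>
      (C i ∩ Finset.univ.filter fun v => t n ≤ c v) ∪ (Finset.univ.filter fun v => 1 - t n < c v)
      with hY
    have hmemY : ∀ (i : Fin m) (n : ℕ) (v : V),
        v ∈ Y i n ↔ ((v ∈ C i ∧ t n ≤ c v) ∨ 1 - t n < c v) := by
      intro i n v
      rw [hY]
      simp [Finset.mem_union, Finset.mem_inter, Finset.mem_filter]
    have hYcov : ∀ (i : Fin m) (n : ℕ), IsVertexCover G_A (Y i n) := by
      intro i n u v huv
      have hsum := hedge huv
      rcases hCcover i ((SimpleGraph.sup_adj G_A (H i) u v).mpr (Or.inl huv)) with h | h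
      · by_cases hcu : t n ≤ c u
        · exact Or.inl ((hmemY i n u).mpr (Or.inl ⟨h, hcu⟩))
        · push_neg at hcu
          exact Or.inr ((hmemY i n v).mpr (Or.inr (by linarith)))
      · by_cases hcv : t n ≤ c v
        · exact Or.inr ((hmemY i n v).mpr (Or.inl ⟨h, hcv⟩))
        · push_neg at hcv
          exact Or.inl ((hmemY i n u).mpr (Or.inr (by linarith)))
    have hXY : ∀ (i : Fin m) (n : ℕ), ∑ v ∈ X, (1 - (2 - β) * c v)
        ≤ ∑ v ∈ Y i n, (1 - (2 - β) * c v) := fun i n => hXmin _ (hYcov i n)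
    -- averaging
    have step1 : ∑ v ∈ X, (1 - (2 - β) * c v)
        ≤ ∑ i, p i * ∑ n ∈ Finset.range r, μ n * (∑ v ∈ Y i n, (1 - (2 - β) * c v)) := by
      have hK : ∀ K : ℝ, (∑ i, p i * ∑ n ∈ Finset.range r, μ n * K) = K := by
        intro K
        rw [← Finset.sum_mul, hpsum, one_mul, ← Finset.sum_mul, hμsum, one_mul]
      calc ∑ v ∈ X, (1 - (2 - β) * c v)
          = ∑ i, p i * ∑ n ∈ Finset.range r, μ n * (∑ v ∈ X, (1 - (2 - β) * c v)) :=
            (hK _).symm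
        _ ≤ ∑ i, p i * ∑ n ∈ Finset.range r, μ n * (∑ v ∈ Y i n, (1 - (2 - β) * c v)) := by
            refine Finset.sum_le_sum fun i _ => mul_le_mul_of_nonneg_left ?_ (hp i)
            exact Finset.sum_le_sum fun n _ => mul_le_mul_of_nonneg_left (hXY i n) (hμ0 n)
    have hWite : ∀ (i : Fin m) (n : ℕ), ∑ v ∈ Y i n, (1 - (2 - β) * c v)
        = ∑ v, (if v ∈ Y i n then (1 - (2 - β) * c v) else 0) := by
      intro i n
      rw [Finset.sum_ite_mem, Finset.univ_inter]
    have hswap : ∑ i, p i * ∑ n ∈ Finset.range r, μ n * (∑ v ∈ Y i n, (1 - (2 - β) * c v))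
        = ∑ v, ∑ n ∈ Finset.range r, ∑ i,
            p i * (μ n * (if v ∈ Y i n then (1 - (2 - β) * c v) else 0)) := by
      calc ∑ i, p i * ∑ n ∈ Finset.range r, μ n * (∑ v ∈ Y i n, (1 - (2 - β) * c v))
          = ∑ i, ∑ n ∈ Finset.range r, ∑ v,
              p i * (μ n * (if v ∈ Y i n then (1 - (2 - β) * c v) else 0)) := by
            refine Finset.sum_congr rfl fun i _ => ?_
            rw [Finset.mul_sum]
            refine Finset.sum_congr rfl fun n _ => ?_
            rw [hWite i n, Finset.mul_sum, Finset.mul_sum]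
        _ = ∑ n ∈ Finset.range r, ∑ i, ∑ v,
              p i * (μ n * (if v ∈ Y i n then (1 - (2 - β) * c v) else 0)) := Finset.sum_comm
        _ = ∑ n ∈ Finset.range r, ∑ v, ∑ i,
              p i * (μ n * (if v ∈ Y i n then (1 - (2 - β) * c v) else 0)) := by
            exact Finset.sum_congr rfl fun n _ => Finset.sum_comm
        _ = ∑ v, ∑ n ∈ Finset.range r, ∑ i,
              p i * (μ n * (if v ∈ Y i n then (1 - (2 - β) * c v) else 0)) := Finset.sum_comm
    have hinner : ∀ (vv : V) (n : ℕ),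
        ∑ i, p i * (μ n * (if vv ∈ Y i n then (1 - (2 - β) * c vv) else 0))
        = μ n * (if 1 - t n < c vv then (1 - (2 - β) * c vv)
            else if t n ≤ c vv then c vv * (1 - (2 - β) * c vv) else 0) := by
      intro vv n
      by_cases hbig : 1 - t n < c vv
      · rw [if_pos hbig]
        have hcong : ∀ i ∈ Finset.univ, p i * (μ n * (if vv ∈ Y i n then (1 - (2 - β) * c vv) else 0))
            = p i * (μ n * (1 - (2 - β) * c vv)) := by
          intro i _
          rw [if_pos ((hmemY i n vv).mpr (Or.inr hbig))]
        rw [Finset.sum_congr rfl hcong, ← Finset.sum_mul, hpsum, one_mul]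
      · rw [if_neg hbig]
        by_cases hmid : t n ≤ c vv
        · rw [if_pos hmid]
          have hcong : ∀ i ∈ Finset.univ, p i * (μ n * (if vv ∈ Y i n then (1 - (2 - β) * c vv) else 0))
              = μ n * ((1 - (2 - β) * c vv) * (if vv ∈ C i then p i else 0)) := by
            intro i _
            by_cases hCi : vv ∈ C i
            · rw [if_pos ((hmemY i n vv).mpr (Or.inl ⟨hCi, hmid⟩)), if_pos hCi]; ring
            · rw [if_neg (fun hin => by
                rcases (hmemY i n vv).mp hin with ⟨h1, _⟩ | h1
                · exact hCi h1
                · exact hbig h1), if_neg hCi]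
              ring
          rw [Finset.sum_congr rfl hcong, ← Finset.mul_sum, ← Finset.mul_sum, ← hc vv]
          ring_nf
        · rw [if_neg hmid]
          have hcong : ∀ i ∈ Finset.univ, p i * (μ n * (if vv ∈ Y i n then (1 - (2 - β) * c vv) else 0))
              = 0 := by
            intro i _
            rw [if_neg (fun hin => by
              rcases (hmemY i n vv).mp hin with ⟨_, h1⟩ | h1
              · exact hmid h1
              · exact hbig h1)]
            ring
          rw [Finset.sum_congr rfl hcong, Finset.sum_const, smul_zero, mul_zero]
    have hperv : ∀ vv : V, ∑ n ∈ Finset.range r,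
        μ n * (if 1 - t n < c vv then (1 - (2 - β) * c vv)
            else if t n ≤ c vv then c vv * (1 - (2 - β) * c vv) else 0)
        ≤ (β/2) * c vv := by
      intro vv
      rcases le_or_gt (c vv) (1/2) with hhalf | hhalf
      · -- low case : exact equality with (β/2) * c vv
        have hmemΘ : c vv ∈ Θ := by
          have hmineq : min (c vv) (1 - c vv) = c vv := min_eq_left (by linarith)
          rw [hΘ]
          exact Finset.mem_insert_of_mem (hmineq ▸ Finset.mem_image_of_mem _ (Finset.mem_univ vv))
        have hcongn : ∀ n ∈ Finset.range r,
            μ n * (if 1 - t n < c vv then (1 - (2 - β) * c vv)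
              else if t n ≤ c vv then c vv * (1 - (2 - β) * c vv) else 0)
            = (if t n ≤ c vv then μ n else 0) * (c vv * (1 - (2 - β) * c vv)) := by
          intro n _
          have hnbig : ¬ (1 - t n < c vv) := by linarith [hthalf n]
          rw [if_neg hnbig]
          by_cases hmid : t n ≤ c vv
          · rw [if_pos hmid, if_pos hmid]
          · rw [if_neg hmid, if_neg hmid]; ring
        rw [Finset.sum_congr rfl hcongn, ← Finset.sum_mul, hpartial (c vv) hmemΘ]
        have hden := hdenom (c vv) hhalf
        have heq : (β/2) / (1 - (2-β)*(c vv)) * (c vv * (1 - (2 - β) * c vv))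
            = (β/2) * c vv := by
          field_simp
        rw [heq]
    -- high case
      · have hmemΘ : 1 - c vv ∈ Θ := by
          have hmineq : min (c vv) (1 - c vv) = 1 - c vv := min_eq_right (by linarith)
          rw [hΘ]
          exact Finset.mem_insert_of_mem (hmineq ▸ Finset.mem_image_of_mem _ (Finset.mem_univ vv))
        have hq := hpartial (1 - c vv) hmemΘ
        have hcongn : ∀ n ∈ Finset.range r,
            μ n * (if 1 - t n < c vv then (1 - (2 - β) * c vv)
              else if t n ≤ c vv then c vv * (1 - (2 - β) * c vv) else 0)
            = μ n * (1 - (2 - β) * c vv)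
              + (if t n ≤ 1 - c vv then μ n else 0)
                * (c vv * (1 - (2 - β) * c vv) - (1 - (2 - β) * c vv)) := by
          intro n _
          by_cases hle : t n ≤ 1 - c vv
          · have hnbig : ¬ (1 - t n < c vv) := by linarith
            have hmid : t n ≤ c vv := by linarith [hthalf n]
            rw [if_neg hnbig, if_pos hmid, if_pos hle]; ring
          · push_neg at hle
            have hnbig : 1 - t n < c vv := by linarith
            rw [if_pos hnbig, if_neg (not_le.mpr hle)]; ring
        rw [Finset.sum_congr rfl hcongn, Finset.sum_add_distrib, ← Finset.sum_mul,
          ← Finset.sum_mul, hμsum, hq, one_mul]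
        have hd1 : 0 < 1 - (2-β)*(1 - c vv) := hdenom (1 - c vv) (by linarith)
        have hqd : (β/2) / (1 - (2-β)*(1 - c vv)) * (1 - (2-β)*(1 - c vv)) = β/2 :=
          div_mul_cancel₀ _ (ne_of_gt hd1)
        set q : ℝ := (β/2) / (1 - (2-β)*(1 - c vv)) with hqdef
        have hkey : (1 - (2-β)*(c vv)) * (1 - (2-β)*(1 - c vv))
            + (β/2)*((c vv) - 1)*(1 - (2-β)*(c vv))
            + ((2-β)/2)*(2*(c vv) - 1)^2
            = (β/2)*(c vv)*(1 - (2-β)*(1 - c vv)) := by ring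
        have hmul : ((1 - (2 - β) * c vv)
            + q * (c vv * (1 - (2 - β) * c vv) - (1 - (2 - β) * c vv)))
            * (1 - (2-β)*(1 - c vv)) ≤ ((β/2) * c vv) * (1 - (2-β)*(1 - c vv)) := by
          have hexpand : ((1 - (2 - β) * c vv)
              + q * (c vv * (1 - (2 - β) * c vv) - (1 - (2 - β) * c vv)))
              * (1 - (2-β)*(1 - c vv))
              = (1 - (2 - β) * c vv) * (1 - (2-β)*(1 - c vv))
                + (q * (1 - (2-β)*(1 - c vv))) * (((c vv) - 1) * (1 - (2 - β) * c vv)) := by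
            ring
          rw [hexpand, hqd]
          nlinarith [sq_nonneg (2*(c vv) - 1), h2β]
        exact le_of_mul_le_mul_right hmul hd1
    calc ∑ v ∈ X, (1 - (2 - β) * c v)
        ≤ ∑ i, p i * ∑ n ∈ Finset.range r, μ n * (∑ v ∈ Y i n, (1 - (2 - β) * c v)) := step1
      _ = ∑ v, ∑ n ∈ Finset.range r, ∑ i,
            p i * (μ n * (if v ∈ Y i n then (1 - (2 - β) * c v) else 0)) := hswap
      _ = ∑ v, ∑ n ∈ Finset.range r,
            μ n * (if 1 - t n < c v then (1 - (2 - β) * c v)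
              else if t n ≤ c v then c v * (1 - (2 - β) * c v) else 0) := by
          exact Finset.sum_congr rfl fun v _ =>
            Finset.sum_congr rfl fun n _ => hinner v n
      _ ≤ ∑ v, (β/2) * c v := Finset.sum_le_sum fun v _ => hperv v
      _ = (β/2) * ∑ v, c v := by rw [Finset.mul_sum]
  -- assembly
  have hXc : (X.card : ℝ) = ∑ v ∈ X, (1:ℝ) := by simp
  calc ∑ i, p i * ((X.card : ℝ) + (2 - β) * (tau (inducedOutside (H i) X) : ℝ))
      ≤ ∑ i, p i * ((X.card : ℝ) + (2 - β) * (((C i).card : ℝ) - (((C i) ∩ X).card : ℝ))) := by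
        refine Finset.sum_le_sum fun i _ => ?_
        have := key1 i
        have h' : (2 - β) * (tau (inducedOutside (H i) X) : ℝ) ≤
            (2 - β) * (((C i).card : ℝ) - (((C i) ∩ X).card : ℝ)) := by
          exact mul_le_mul_of_nonneg_left this (le_of_lt h2β)
        exact mul_le_mul_of_nonneg_left (by linarith) (hp i)
    _ = (X.card : ℝ) - (2 - β) * (∑ v ∈ X, c v) + (2 - β) * ∑ i, p i * ((C i).card : ℝ) := by
        rw [← hsumS X]
        have hexp : ∀ i ∈ Finset.univ, p i * ((X.card : ℝ) +
            (2 - β) * (((C i).card:ℝ) - (((C i) ∩ X).card:ℝ))) =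
            p i * (X.card:ℝ) + ((2 - β) * (p i * ((C i).card:ℝ)) -
            (2 - β) * (p i * ((((C i) ∩ X).card:ℝ)))) := fun i _ => by ring
        rw [Finset.sum_congr rfl hexp, Finset.sum_add_distrib, Finset.sum_sub_distrib,
          ← Finset.sum_mul, hpsum, one_mul, ← Finset.mul_sum, ← Finset.mul_sum]
        ring
    _ = (∑ v ∈ X, (1 - (2 - β) * c v)) + (2 - β) * ∑ i, p i * ((C i).card : ℝ) := by
        rw [Finset.sum_sub_distrib, ← Finset.mul_sum]
        simp
    _ ≤ (β/2) * (∑ v, c v) + (2 - β) * ∑ i, p i * ((C i).card : ℝ) := by linarith [crux]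
    _ = (2 - β/2) * ∑ i, p i * ((C i).card : ℝ) := by rw [hT]; ring
    _ = (2 - β / 2) * ∑ i, p i * (tau (G_A ⊔ H i) : ℝ) := by
        congr 1
        refine Finset.sum_congr rfl fun i _ => ?_
        rw [← hCmin i]
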